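/- arXiv:2008.09843 — 3 statements merged into one kernel-verified Lean document; each statement's English description precedes it below -/
import Mathlib

section
/- Let a, b, c, γ̄ > 0 and T_c > 1, and suppose γ̄ b (T_c−1)/(1+γ̄ c) > ln(1+γ̄ c). Then there exists a unique K* ∈ (0, T_c − 1) satisfying γ̄ (T_c − K − 1)(2aK + b) / (1 + γ̄(aK² + bK + c)) = ln(1 + γ̄(aK² + bK + c)), and this K* is the unique maximizer of R̃(K) = (1 − (K+1)/T_c)·log₂(1 + γ̄(aK² + bK + c)) on (0, T_c − 1]. -/
namespace UniqueOptK

/-- `u(K) = 1 + γ q(K)` -/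
def U (a b c γ K : ℝ) : ℝ := 1 + γ * (a * K ^ 2 + b * K + c)

/-- `Φ(K) = γ (Tc − K − 1) q'(K) − u(K) ln u(K)` -/
noncomputable def Phi (a b c γ Tc K : ℝ) : ℝ :=
  γ * (Tc - K - 1) * (2 * a * K + b) - U a b c γ K * Real.log (U a b c γ K)

/-- `F(K) = (Tc − K − 1) ln u(K)` -/
noncomputable def F (a b c γ Tc K : ℝ) : ℝ := (Tc - K - 1) * Real.log (U a b c γ K)

theorem U_hasDerivAt (a b c γ K : ℝ) :
    HasDerivAt (fun K => U a b c γ K) (γ * (2 * a * K + b)) K := by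
  have h : HasDerivAt (fun K : ℝ => a * K ^ 2 + b * K + c)
      (a * (2 * K ^ 1) + b * 1) K :=
    (((hasDerivAt_pow 2 K).const_mul a).add ((hasDerivAt_id K).const_mul b)).add_const c
  have h2 := (h.const_mul γ).const_add 1
  have he : (fun K => U a b c γ K) = fun K : ℝ => 1 + γ * (a * K ^ 2 + b * K + c) := rfl
  rw [he]
  refine h2.congr_deriv ?_
  ring

theorem logU_hasDerivAt (a b c γ K : ℝ) (hU : 0 < U a b c γ K) :
    HasDerivAt (fun K => Real.log (U a b c γ K))
      ((U a b c γ K)⁻¹ * (γ * (2 * a * K + b))) K :=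
  (Real.hasDerivAt_log hU.ne').comp K (U_hasDerivAt a b c γ K)

theorem Phi_hasDerivAt (a b c γ Tc K : ℝ) (hU : 0 < U a b c γ K) :
    HasDerivAt (fun K => Phi a b c γ Tc K)
      (2 * a * γ * (Tc - 1 - K) - γ * (2 * a * K + b) * (2 + Real.log (U a b c γ K))) K := by
  have h1 : HasDerivAt (fun K : ℝ => γ * (Tc - K - 1)) (γ * (-1)) K := by
    have := (((hasDerivAt_id K).const_sub Tc).sub_const 1).const_mul γ
    simpa using this
  have h2 : HasDerivAt (fun K : ℝ => 2 * a * K + b) (2 * a * 1) K :=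
    ((hasDerivAt_id K).const_mul (2 * a)).add_const b
  have h3 := (h1.mul h2).sub ((U_hasDerivAt a b c γ K).mul (logU_hasDerivAt a b c γ K hU))
  refine h3.congr_deriv ?_
  field_simp
  ring

theorem F_hasDerivAt (a b c γ Tc K : ℝ) (hU : 0 < U a b c γ K) :
    HasDerivAt (fun K => F a b c γ Tc K) (Phi a b c γ Tc K / U a b c γ K) K := by
  have h1 : HasDerivAt (fun K : ℝ => Tc - K - 1) (-1) K := by
    simpa using ((hasDerivAt_id K).const_sub Tc).sub_const 1
  have h3 := h1.mul (logU_hasDerivAt a b c γ K hU)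
  refine h3.congr_deriv ?_
  simp only [Phi]
  field_simp
  ring

end UniqueOptK

open UniqueOptK

/-- There is a unique `K* ∈ (0, T_c − 1)` satisfying the stationarity equation
`γ̄(T_c − K − 1)(2aK + b)/(1 + γ̄(aK² + bK + c)) = ln(1 + γ̄(aK² + bK + c))`,
and this `K*` is the unique maximizer of
`R̃(K) = (1 − (K+1)/T_c) log₂(1 + γ̄(aK² + bK + c))` on `(0, T_c − 1]`. -/
theorem unique_optimal_K (a b c γ Tc : ℝ)
    (ha : 0 < a) (hb : 0 < b) (hc : 0 < c) (hγ : 0 < γ) (hTc : 1 < Tc)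
    (hcond : γ * b * (Tc - 1) / (1 + γ * c) > Real.log (1 + γ * c)) :
    ∃! K : ℝ, K ∈ Set.Ioo (0 : ℝ) (Tc - 1) ∧
      γ * (Tc - K - 1) * (2 * a * K + b) / (1 + γ * (a * K ^ 2 + b * K + c))
        = Real.log (1 + γ * (a * K ^ 2 + b * K + c)) ∧
      ∀ K' ∈ Set.Ioc (0 : ℝ) (Tc - 1), K' ≠ K →
        (1 - (K' + 1) / Tc) * Real.logb 2 (1 + γ * (a * K' ^ 2 + b * K' + c))
          < (1 - (K + 1) / Tc) * Real.logb 2 (1 + γ * (a * K ^ 2 + b * K + c)) := by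
  -- basic positivity facts
  have hU1 : ∀ K : ℝ, 0 ≤ K → 1 < U a b c γ K := by
    intro K hK
    have : 0 < a * K ^ 2 + b * K + c := by positivity
    simp only [U]; nlinarith
  have hUpos : ∀ K : ℝ, 0 ≤ K → 0 < U a b c γ K := fun K hK => lt_trans one_pos (hU1 K hK)
  have hlogpos : ∀ K : ℝ, 0 ≤ K → 0 < Real.log (U a b c γ K) :=
    fun K hK => Real.log_pos (hU1 K hK)
  have hv : (0:ℝ) < 1 + γ * c := by positivity
  have hU0 : U a b c γ 0 = 1 + γ * c := by simp [U]
  -- Φ(0) > 0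
  have hΦ0 : 0 < Phi a b c γ Tc 0 := by
    have h1 : Real.log (1 + γ * c) * (1 + γ * c) < γ * b * (Tc - 1) :=
      (lt_div_iff₀ hv).mp hcond
    simp only [Phi, hU0]
    nlinarith
  -- Φ(Tc-1) < 0
  have hΦT : Phi a b c γ Tc (Tc - 1) < 0 := by
    have h1 : 0 ≤ (Tc - 1 : ℝ) := by linarith
    have h2 := mul_pos (hUpos _ h1) (hlogpos _ h1)
    simp only [Phi]
    nlinarith
  -- continuity of Φ on [0, Tc-1]
  have hcontPhi : ContinuousOn (fun K => Phi a b c γ Tc K) (Set.Icc 0 (Tc - 1)) := by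
    intro x hx
    exact ((Phi_hasDerivAt a b c γ Tc x (hUpos x hx.1)).differentiableAt).continuousAt.continuousWithinAt
  -- existence of a zero z via IVT
  obtain ⟨z, hzmem, hΦz⟩ := intermediate_value_Ioo' (by linarith : (0:ℝ) ≤ Tc - 1) hcontPhi
    (Set.mem_Ioo.mpr ⟨hΦT, hΦ0⟩)
  obtain ⟨hz0, hzT⟩ := hzmem
  have hΦz : Phi a b c γ Tc z = 0 := hΦz
  -- Φ' is strictly antitone on [0, ∞)
  have hG_anti : StrictAntiOn
      (fun K => 2 * a * γ * (Tc - 1 - K) - γ * (2 * a * K + b) * (2 + Real.log (U a b c γ K)))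
      (Set.Ici 0) := by
    intro x hx y hy hxy
    simp only [Set.mem_Ici] at hx hy
    dsimp only
    have hUxy : U a b c γ x < U a b c γ y := by
      have h5 : a * x ^ 2 + b * x + c < a * y ^ 2 + b * y + c := by
        nlinarith [mul_nonneg (mul_nonneg ha.le (sub_pos.mpr hxy).le) (by linarith : (0:ℝ) ≤ x + y), mul_pos hb (sub_pos.mpr hxy)]
      have h6 := mul_lt_mul_of_pos_left h5 hγ
      simp only [U]; linarith
    have hlog : Real.log (U a b c γ x) < Real.log (U a b c γ y) :=
      Real.log_lt_log (hUpos x hx) hUxy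
    have h1 : (2 * a * x + b) * (2 + Real.log (U a b c γ x))
        < (2 * a * y + b) * (2 + Real.log (U a b c γ y)) := by
      have hlx := hlogpos x hx
      apply mul_lt_mul'' (by nlinarith) (by linarith) (by positivity) (by positivity)
    have h2 : 2 * a * γ * (Tc - 1 - y) < 2 * a * γ * (Tc - 1 - x) := by nlinarith [mul_pos ha hγ]
    nlinarith [mul_lt_mul_of_pos_left h1 hγ, h2]
  -- Φ is strictly concave on [0, ∞)
  have hconc : StrictConcaveOn ℝ (Set.Ici 0) (fun K => Phi a b c γ Tc K) := by
    apply StrictAntiOn.strictConcaveOn_of_deriv (convex_Ici 0)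
    · intro x hx
      exact ((Phi_hasDerivAt a b c γ Tc x (hUpos x hx)).differentiableAt).continuousAt.continuousWithinAt
    · rw [interior_Ici]
      intro x hx y hy hxy
      rw [(Phi_hasDerivAt a b c γ Tc x (hUpos x (le_of_lt hx))).deriv,
        (Phi_hasDerivAt a b c γ Tc y (hUpos y (le_of_lt hy))).deriv]
      exact hG_anti (Set.mem_Ici.mpr (le_of_lt hx)) (Set.mem_Ici.mpr (le_of_lt hy)) hxy
  -- sign of Φ left of z
  have hsign_pos : ∀ x : ℝ, 0 ≤ x → x < z → 0 < Phi a b c γ Tc x := by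
    intro x hx hxz
    rcases eq_or_lt_of_le hx with h | h
    · rwa [← h]
    · have hp : 0 < (z - x) / z := by
        apply div_pos <;> linarith
      have hq : 0 < x / z := by positivity
      have hpq : (z - x) / z + x / z = 1 := by field_simp; ring
      have := hconc.2 (Set.self_mem_Ici) (Set.mem_Ici.mpr (le_of_lt hz0))
        (by linarith : (0:ℝ) ≠ z) hp hq hpq
      simp only [smul_eq_mul, mul_zero, zero_add, hΦz, mul_zero, add_zero] at this
      have hx' : x / z * z = x := by field_simp
      rw [hx'] at this
      nlinarith [this]
  -- sign of Φ right of z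
  have hsign_neg : ∀ y : ℝ, z < y → Phi a b c γ Tc y < 0 := by
    intro y hzy
    have hy0 : 0 < y := lt_trans hz0 hzy
    have hq : 0 < z / y := by positivity
    have hp : 0 < 1 - z / y := by
      have : z / y < 1 := (div_lt_one hy0).mpr hzy
      linarith
    have := hconc.2 (Set.self_mem_Ici) (Set.mem_Ici.mpr (le_of_lt hy0))
      (by linarith : (0:ℝ) ≠ y) hp hq (by ring)
    simp only [smul_eq_mul, mul_zero, zero_add] at this
    have hz' : z / y * y = z := by field_simp
    rw [hz', hΦz] at this
    nlinarith [this]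
  -- F is strictly monotone on [0, z] and strictly antitone on [z, Tc-1]
  have hFmono : StrictMonoOn (fun K => F a b c γ Tc K) (Set.Icc 0 z) := by
    apply strictMonoOn_of_deriv_pos (convex_Icc 0 z)
    · intro x hx
      exact ((F_hasDerivAt a b c γ Tc x (hUpos x hx.1)).differentiableAt).continuousAt.continuousWithinAt
    · rw [interior_Icc]
      intro x hx
      rw [(F_hasDerivAt a b c γ Tc x (hUpos x (le_of_lt hx.1))).deriv]
      exact div_pos (hsign_pos x (le_of_lt hx.1) hx.2) (hUpos x (le_of_lt hx.1))
  have hFanti : StrictAntiOn (fun K => F a b c γ Tc K) (Set.Icc z (Tc - 1)) := by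
    apply strictAntiOn_of_deriv_neg (convex_Icc z (Tc - 1))
    · intro x hx
      have hx0 : (0:ℝ) ≤ x := le_trans (le_of_lt hz0) hx.1
      exact ((F_hasDerivAt a b c γ Tc x (hUpos x hx0)).differentiableAt).continuousAt.continuousWithinAt
    · rw [interior_Icc]
      intro x hx
      have hx0 : (0:ℝ) ≤ x := le_trans (le_of_lt hz0) (le_of_lt hx.1)
      rw [(F_hasDerivAt a b c γ Tc x (hUpos x hx0)).deriv]
      exact div_neg_of_neg_of_pos (hsign_neg x hx.1) (hUpos x hx0)
  -- conversion between R̃ and F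
  have hTc0 : (0:ℝ) < Tc := by linarith
  have hlog2 : (0:ℝ) < Real.log 2 := Real.log_pos one_lt_two
  have hR : ∀ K : ℝ, 0 ≤ K → (1 - (K + 1) / Tc) * Real.logb 2 (1 + γ * (a * K ^ 2 + b * K + c))
      = F a b c γ Tc K / (Tc * Real.log 2) := by
    intro K hK
    have hUK : (1 + γ * (a * K ^ 2 + b * K + c)) ≠ 0 := by
      have := hUpos K hK; simp only [U] at this; linarith
    simp only [Real.logb, F, U]
    field_simp
    ring
  refine ⟨z, ⟨⟨hz0, hzT⟩, ?_, ?_⟩, ?_⟩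
  · -- stationarity equation at z
    have hUz := hUpos z (le_of_lt hz0)
    rw [div_eq_iff (ne_of_gt (show (0:ℝ) < 1 + γ * (a * z ^ 2 + b * z + c) from hUz))]
    have := hΦz
    simp only [Phi, U] at this
    linarith
  · -- maximality
    intro K' hK' hne
    rw [hR K' (le_of_lt hK'.1), hR z (le_of_lt hz0)]
    have hF : F a b c γ Tc K' < F a b c γ Tc z := by
      rcases lt_or_gt_of_ne hne with h | h
      · exact hFmono (Set.mem_Icc.mpr ⟨le_of_lt hK'.1, le_of_lt h⟩)
          (Set.mem_Icc.mpr ⟨le_of_lt hz0, le_refl z⟩) h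
      · exact hFanti (Set.mem_Icc.mpr ⟨le_refl z, le_of_lt hzT⟩)
          (Set.mem_Icc.mpr ⟨le_of_lt h, hK'.2⟩) h
    exact (div_lt_div_iff_of_pos_right (mul_pos hTc0 hlog2)).mpr hF
  · -- uniqueness
    intro K ⟨hKmem, hKeq, _⟩
    have hUK := hUpos K (le_of_lt hKmem.1)
    have hΦK : Phi a b c γ Tc K = 0 := by
      rw [div_eq_iff (ne_of_gt (show (0:ℝ) < 1 + γ * (a * K ^ 2 + b * K + c) from hUK))] at hKeq
      simp only [Phi, U]
      linarith
    rcases lt_trichotomy K z with h | h | h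
    · exact absurd hΦK (ne_of_gt (hsign_pos K (le_of_lt hKmem.1) h))
    · exact h
    · exact absurd hΦK (ne_of_lt (hsign_neg K h))
end

section
/- Let f(K) = (1 − (K+1)/T_c)·log₂(γ̄ a K²) for K ∈ (0, T_c − 1), with a, γ̄ > 0, T_c > 1, and γ̄ a (T_c−1)² > e². Then the unique critical point of f in (0, T_c−1) is K = (T_c − 1)/W(e·√(γ̄ a)·(T_c − 1)), where W is the principal Lambert W function. -/
/-- For `f(K) = (1 − (K+1)/T_c) log₂(γ̄ a K²)` with `a, γ̄ > 0`, `T_c > 1` and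
`γ̄ a (T_c−1)² > e²`, the unique critical point of `f` in `(0, T_c − 1)` is
`K = (T_c − 1)/W(e √(γ̄a) (T_c − 1))`, where `w = W(e √(γ̄a) (T_c−1))` is
characterized by `w > 0`, `w e^w = e √(γ̄a) (T_c−1)`. -/
theorem high_snr_critical_point (a γ Tc : ℝ)
    (ha : 0 < a) (hγ : 0 < γ) (hTc : 1 < Tc)
    (hcond : γ * a * (Tc - 1) ^ 2 > Real.exp 1 ^ 2)
    (w : ℝ) (hw : 0 < w)
    (hweq : w * Real.exp w = Real.exp 1 * Real.sqrt (γ * a) * (Tc - 1)) :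
    ∀ K ∈ Set.Ioo (0 : ℝ) (Tc - 1),
      (deriv (fun K : ℝ => (1 - (K + 1) / Tc) * Real.logb 2 (γ * a * K ^ 2)) K = 0
        ↔ K = (Tc - 1) / w) := by
  intro K hK
  obtain ⟨hK0, hK1⟩ := hK
  have hT1 : (0:ℝ) < Tc - 1 := by linarith
  have hTc0 : (0:ℝ) < Tc := by linarith
  have hγa : 0 < γ * a := mul_pos hγ ha
  have hu : 0 < γ * a * K ^ 2 := mul_pos hγa (pow_pos hK0 2)
  have hlog2 : (0:ℝ) < Real.log 2 := Real.log_pos one_lt_two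
  set g : ℝ → ℝ := fun x => 2 * (Tc - 1) / x - 2 - Real.log (γ * a) - 2 * Real.log x with hg
  -- g is strictly decreasing on (0, ∞)
  have hganti : StrictAntiOn g (Set.Ioi 0) := by
    intro x hx y hy hxy
    have h1 : 2 * (Tc - 1) / y < 2 * (Tc - 1) / x :=
      div_lt_div_of_pos_left (by linarith) hx hxy
    have h2 : Real.log x < Real.log y := Real.log_lt_log hx hxy
    simp only [hg]
    linarith
  -- g ((Tc-1)/w) = 0
  have hwlog : Real.log w + w = 1 + Real.log (γ * a) / 2 + Real.log (Tc - 1) := by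
    have h1 : Real.log (w * Real.exp w) = Real.log w + w := by
      rw [Real.log_mul (ne_of_gt hw) (Real.exp_ne_zero w), Real.log_exp]
    have h2 : Real.log (Real.exp 1 * Real.sqrt (γ * a) * (Tc - 1))
        = 1 + Real.log (γ * a) / 2 + Real.log (Tc - 1) := by
      rw [Real.log_mul (by positivity) (ne_of_gt hT1),
        Real.log_mul (Real.exp_ne_zero 1) (by positivity), Real.log_exp,
        Real.log_sqrt hγa.le]
    rw [← h1, hweq, h2]
  have hg0 : g ((Tc - 1) / w) = 0 := by
    have hK₀ : (0:ℝ) < (Tc - 1) / w := div_pos hT1 hw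
    have hlq : Real.log ((Tc - 1) / w) = Real.log (Tc - 1) - Real.log w :=
      Real.log_div (ne_of_gt hT1) (ne_of_gt hw)
    have hdd : 2 * (Tc - 1) / ((Tc - 1) / w) = 2 * w := by
      field_simp
    simp only [hg, hdd, hlq]
    linarith
  -- derivative computation
  have h1 : HasDerivAt (fun K : ℝ => 1 - (K + 1) / Tc) (-(1/Tc)) K := by
    have h : HasDerivAt (fun K : ℝ => (K + 1)) 1 K := (hasDerivAt_id K).add_const 1
    simpa using (h.div_const Tc).const_sub 1
  have h2 : HasDerivAt (fun K : ℝ => γ * a * K ^ 2) (γ * a * (2 * K ^ 1)) K :=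
    (hasDerivAt_pow 2 K).const_mul (γ * a)
  have h3 : HasDerivAt (fun K : ℝ => Real.log (γ * a * K ^ 2) / Real.log 2)
      (γ * a * (2 * K ^ 1) / (γ * a * K ^ 2) / Real.log 2) K :=
    (h2.log (ne_of_gt hu)).div_const (Real.log 2)
  have hd : HasDerivAt (fun K : ℝ => (1 - (K + 1) / Tc) * Real.logb 2 (γ * a * K ^ 2))
      ((-(1/Tc)) * (Real.log (γ * a * K ^ 2) / Real.log 2)
        + (1 - (K + 1) / Tc) * (γ * a * (2 * K ^ 1) / (γ * a * K ^ 2) / Real.log 2)) K := by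
    simpa [Real.logb] using h1.fun_mul h3
  rw [hd.deriv]
  -- relate the derivative value to g
  have hL : Real.log (γ * a * K ^ 2) = Real.log (γ * a) + 2 * Real.log K := by
    rw [Real.log_mul (ne_of_gt hγa) (by positivity), Real.log_pow]
    ring
  have hval : (-(1/Tc)) * (Real.log (γ * a * K ^ 2) / Real.log 2)
        + (1 - (K + 1) / Tc) * (γ * a * (2 * K ^ 1) / (γ * a * K ^ 2) / Real.log 2)
      = (g K * K) / (Tc * K * Real.log 2) := by
    simp only [hg, hL]
    field_simp
    ring
  rw [hval]
  have hden : Tc * K * Real.log 2 ≠ 0 := by positivity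
  constructor
  · intro h
    have hgK : g K = 0 := by
      have := (div_eq_zero_iff.mp h).resolve_right hden
      rcases mul_eq_zero.mp this with h' | h'
      · exact h'
      · exact absurd h' (ne_of_gt hK0)
    exact hganti.injOn (Set.mem_Ioi.mpr hK0) (Set.mem_Ioi.mpr (div_pos hT1 hw))
      (by rw [hgK, hg0])
  · intro h
    rw [h, hg0]
    simp
end

section
/- Let a, b, c, γ̄ > 0, T_c > 1, and let K* be the unique maximizer of R̃(K) = (1 − (K+1)/T_c)·log₂(1 + γ̄(aK² + bK + c)) on (0, T_c − 1]. Viewing K* as a function of T_c (with a, b, c, γ̄ fixed), K* is strictly increasing in T_c. -/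
set_option maxHeartbeats 1000000 in
/-- The optimal `K*`, characterized as the unique stationary point in
`(0, T_c − 1)` of `R̃(K) = (1 − (K+1)/T_c) log₂(1 + γ̄(aK² + bK + c))`
(equivalently, the unique solution of
`γ̄(T_c − K − 1)(2aK + b)/(1 + γ̄(aK² + bK + c)) = ln(1 + γ̄(aK² + bK + c))`),
is strictly increasing in `T_c`. -/
theorem optimal_K_increasing_in_Tc (a b c γ : ℝ)
    (ha : 0 < a) (hb : 0 < b) (hc : 0 < c) (hγ : 0 < γ) :
    ∀ Tc₁ Tc₂ K₁ K₂ : ℝ, 1 < Tc₁ → 1 < Tc₂ →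
      γ * b * (Tc₁ - 1) / (1 + γ * c) > Real.log (1 + γ * c) →
      γ * b * (Tc₂ - 1) / (1 + γ * c) > Real.log (1 + γ * c) →
      K₁ ∈ Set.Ioo (0 : ℝ) (Tc₁ - 1) →
      γ * (Tc₁ - K₁ - 1) * (2 * a * K₁ + b) / (1 + γ * (a * K₁ ^ 2 + b * K₁ + c))
        = Real.log (1 + γ * (a * K₁ ^ 2 + b * K₁ + c)) →
      K₂ ∈ Set.Ioo (0 : ℝ) (Tc₂ - 1) →
      γ * (Tc₂ - K₂ - 1) * (2 * a * K₂ + b) / (1 + γ * (a * K₂ ^ 2 + b * K₂ + c))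
        = Real.log (1 + γ * (a * K₂ ^ 2 + b * K₂ + c)) →
      Tc₁ < Tc₂ → K₁ < K₂ := by
  intro Tc₁ Tc₂ K₁ K₂ hT1 hT2 hcond1 hcond2 hK1 heq1 hK2 heq2 hTT
  obtain ⟨hK1pos, hK1lt⟩ := hK1
  obtain ⟨hK2pos, hK2lt⟩ := hK2
  by_contra hlt
  push_neg at hlt
  -- notation
  set u0 : ℝ := 1 + γ * c with hu0def
  set u1 : ℝ := 1 + γ * (a * K₁ ^ 2 + b * K₁ + c) with hu1def
  set u2 : ℝ := 1 + γ * (a * K₂ ^ 2 + b * K₂ + c) with hu2def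
  have hu0pos : 0 < u0 := by positivity
  have hu1pos : 0 < u1 := by positivity
  have hu2pos : 0 < u2 := by positivity
  have hu2ge1 : 1 ≤ u2 := by
    rw [hu2def]
    nlinarith [mul_pos hb hK2pos, mul_nonneg ha.le (sq_nonneg K₂), mul_pos hγ hc]
  -- equations in product form
  have e1 : γ * (Tc₁ - K₁ - 1) * (2 * a * K₁ + b) = u1 * Real.log u1 := by
    rw [div_eq_iff hu1pos.ne'] at heq1; linarith [heq1]
  have e2 : γ * (Tc₂ - K₂ - 1) * (2 * a * K₂ + b) = u2 * Real.log u2 := by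
    rw [div_eq_iff hu2pos.ne'] at heq2; linarith [heq2]
  -- positivity of G₂ at 0
  have g0 : u0 * Real.log u0 < γ * (Tc₂ - 1) * b := by
    rw [gt_iff_lt, lt_div_iff₀ hu0pos] at hcond2; nlinarith [hcond2]
  -- positivity of G₂ at K₁
  have g1 : u1 * Real.log u1 < γ * (Tc₂ - K₁ - 1) * (2 * a * K₁ + b) := by
    have : γ * (Tc₂ - K₁ - 1) * (2 * a * K₁ + b)
        = γ * (Tc₁ - K₁ - 1) * (2 * a * K₁ + b) + γ * (Tc₂ - Tc₁) * (2 * a * K₁ + b) := by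
      ring
    rw [this, ← e1]
    nlinarith [mul_pos (mul_pos hγ (by linarith : (0:ℝ) < Tc₂ - Tc₁))
      (by nlinarith : (0:ℝ) < 2 * a * K₁ + b)]
  -- rule out K₂ = K₁
  rcases eq_or_lt_of_le hlt with heqK | hltK
  · have hu : u2 = u1 := by rw [hu2def, hu1def, heqK]
    rw [heqK] at e2
    rw [hu] at e2
    linarith [e2, g1]
  -- main case: K₂ < K₁, use concavity
  · set t : ℝ := K₂ / K₁ with htdef
    have ht0 : 0 < t := div_pos hK2pos hK1pos
    have ht1 : t < 1 := (div_lt_one hK1pos).mpr hltK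
    have hK2e : K₂ = t * K₁ := by rw [htdef, div_mul_cancel₀ K₂ hK1pos.ne']
    set v : ℝ := (1 - t) * u0 + t * u1 with hvdef
    -- u2 ≤ v  (convexity of the quadratic)
    have huv : u2 ≤ v := by
      rw [hu2def, hvdef, hu0def, hu1def, hK2e]
      have key : 0 ≤ γ * a * K₁ ^ 2 * (t * (1 - t)) :=
        mul_nonneg (by positivity) (mul_nonneg ht0.le (by linarith))
      nlinarith [key]
    -- monotonicity of x log x on [1, ∞)
    have hlog2 : 0 ≤ Real.log u2 := Real.log_nonneg hu2ge1
    have hL2v : u2 * Real.log u2 ≤ v * Real.log v :=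
      mul_le_mul huv (Real.log_le_log hu2pos huv) hlog2 (by linarith)
    -- convexity of x log x
    have hconv := Real.convexOn_mul_log.2 (Set.mem_Ici.mpr hu0pos.le)
      (Set.mem_Ici.mpr hu1pos.le) (by linarith : (0:ℝ) ≤ 1 - t) ht0.le (by ring)
    simp only [smul_eq_mul] at hconv
    have hLv : v * Real.log v ≤ (1 - t) * (u0 * Real.log u0) + t * (u1 * Real.log u1) := by
      calc v * Real.log v = ((1-t) * u0 + t * u1) * Real.log ((1-t) * u0 + t * u1) := by
            rw [hvdef]
        _ ≤ (1-t) * (u0 * Real.log u0) + t * (u1 * Real.log u1) := by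
            have := hconv; linarith [this]
    -- concavity of the quadratic part
    have hQ : (1 - t) * (γ * (Tc₂ - 1) * b) + t * (γ * (Tc₂ - K₁ - 1) * (2 * a * K₁ + b))
        ≤ γ * (Tc₂ - K₂ - 1) * (2 * a * K₂ + b) := by
      rw [hK2e]
      have key : 0 ≤ γ * a * K₁ ^ 2 * (t * (1 - t)) :=
        mul_nonneg (by positivity) (mul_nonneg ht0.le (by linarith))
      nlinarith [key]
    -- combine
    have h1 : (1 - t) * (u0 * Real.log u0) < (1 - t) * (γ * (Tc₂ - 1) * b) := by
      have := sub_pos.mpr ht1; nlinarith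
    have h2 : t * (u1 * Real.log u1) < t * (γ * (Tc₂ - K₁ - 1) * (2 * a * K₁ + b)) := by
      nlinarith
    linarith [e2, hL2v, hLv, hQ, h1, h2]
end
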